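/- Let G be a finite bipartite multigraph constructed as follows from a multigraph H: one color class is the set 𝒳 of components of ⟨OddV(H)⟩_H, the other is the set of components of ⟨EvenV(H)⟩_H, with an edge between X and W if and only if e_H(X, W) is odd. Then every vertex of G lying in the even-side color class (i.e., every component W of ⟨EvenV(H)⟩_H) has even degree in G, i.e., the number of components X of ⟨OddV(H)⟩_H with e_H(X, W) odd is even. -/

import Mathlib

open Finset
open scoped Classical

/-- A multigraph on vertex type `V` with edge index type `E`: each edge `e` has two
distinct endpoints given as an unordered pair `ends e` (no loops, multiple edges allowed). -/
structure Multigraph (V : Type) (E : Type) where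
  ends : E → Sym2 V
  no_loops : ∀ e, ¬ (ends e).IsDiag

namespace Multigraph

variable {V E : Type} [Fintype V] [Fintype E]

/-- The number of edges from the edge set `F` incident with `v`. -/
noncomputable def degIn (G : Multigraph V E) (F : Finset E) (v : V) : ℕ :=
  (F.filter (fun e => v ∈ G.ends e)).card

/-- The degree of `v` in `G`. -/
noncomputable def deg (G : Multigraph V E) (v : V) : ℕ := G.degIn Finset.univ v

/-- The underlying simple graph of `G`. -/
def simple (G : Multigraph V E) : SimpleGraph V where
  Adj x y := x ≠ y ∧ ∃ e : E, G.ends e = s(x, y)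
  symm := ⟨by
    rintro x y ⟨hxy, e, he⟩
    exact ⟨hxy.symm, e, by rw [he, Sym2.eq_swap]⟩⟩
  loopless := ⟨fun x h => h.1 rfl⟩

/-- `C` is the vertex set of a connected component of the subgraph of `G` induced by `S`. -/
def IsComponentOf (G : Multigraph V E) (S : Set V) (C : Finset V) : Prop :=
  ∃ v ∈ S, ∀ x : V, x ∈ C ↔
    Relation.ReflTransGen (fun a b => a ∈ S ∧ b ∈ S ∧ (G.simple).Adj a b) v x

/-- The number of edges of `G` with one endpoint in `U₁` and the other in `U₂`. -/
noncomputable def eBetween (G : Multigraph V E) (U₁ U₂ : Finset V) : ℕ :=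
  (Finset.univ.filter (fun e : E => ∃ x ∈ U₁, ∃ y ∈ U₂, G.ends e = s(x, y))).card

/-- The set of vertices of `G` of odd degree. -/
noncomputable def oddVerts (G : Multigraph V E) : Finset V :=
  Finset.univ.filter (fun v => Odd (G.deg v))

/-- The set of vertices of `G` of even degree. -/
noncomputable def evenVerts (G : Multigraph V E) : Finset V :=
  Finset.univ.filter (fun v => Even (G.deg v))

/-- `F` forms an odd subgraph: every vertex incident with an edge of `F` has odd `F`-degree. -/
def IsOddSet (G : Multigraph V E) (F : Finset E) : Prop :=
  ∀ v : V, (∃ e ∈ F, v ∈ G.ends e) → Odd (G.degIn F v)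

/-- `F` forms an even subgraph: every vertex has even `F`-degree. -/
def IsEvenSet (G : Multigraph V E) (F : Finset E) : Prop :=
  ∀ v : V, Even (G.degIn F v)

end Multigraph

open Multigraph

section Aux

variable {V E : Type} [Fintype V] [Fintype E]

private lemma sym2_rep {α : Type*} (z : Sym2 α) : ∃ a b, z = s(a, b) :=
  Sym2.ind (fun a b => ⟨a, b, rfl⟩) z

private lemma comp_subset {H : Multigraph V E} {S : Set V} {C : Finset V}
    (h : H.IsComponentOf S C) : ∀ x ∈ C, x ∈ S := by
  obtain ⟨v, hv, hm⟩ := h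
  intro x hx
  rcases ((hm x).1 hx).cases_tail with rfl | ⟨c, -, hr⟩
  · exact hv
  · exact hr.2.1

private lemma comp_closed {H : Multigraph V E} {S : Set V} {C : Finset V}
    (h : H.IsComponentOf S C) {a b : V} (ha : a ∈ C) (hb : b ∈ S)
    (hadj : H.simple.Adj a b) : b ∈ C := by
  obtain ⟨v, hv, hm⟩ := h
  exact (hm b).2 (((hm a).1 ha).tail ⟨comp_subset ⟨v, hv, hm⟩ a ha, hb, hadj⟩)

private lemma comp_eq {H : Multigraph V E} {S : Set V} {C C' : Finset V}
    (h : H.IsComponentOf S C) (h' : H.IsComponentOf S C') {x : V}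
    (hx : x ∈ C) (hx' : x ∈ C') : C = C' := by
  obtain ⟨v, hv, hm⟩ := h
  obtain ⟨v', hv', hm'⟩ := h'
  have hsymm : Symmetric (fun a b => a ∈ S ∧ b ∈ S ∧ H.simple.Adj a b) :=
    fun a b hab => ⟨hab.2.1, hab.1, hab.2.2.symm⟩
  haveI : Std.Symm (fun a b => a ∈ S ∧ b ∈ S ∧ H.simple.Adj a b) := ⟨fun a b h => hsymm h⟩
  have hRs : ∀ {a b : V}, Relation.ReflTransGen (fun a b => a ∈ S ∧ b ∈ S ∧ H.simple.Adj a b) a b →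
      Relation.ReflTransGen (fun a b => a ∈ S ∧ b ∈ S ∧ H.simple.Adj a b) b a :=
    fun h => Relation.ReflTransGen.symmetric.symm _ _ h
  have hvv' : Relation.ReflTransGen _ v' v :=
    ((hm' x).1 hx').trans (hRs ((hm x).1 hx))
  ext y
  rw [hm y, hm' y]
  exact ⟨fun hy => hvv'.trans hy, fun hy => (hRs hvv').trans hy⟩

end Aux

theorem stmt13 {V E : Type} [Fintype V] [Fintype E] (H : Multigraph V E)
    (W : Finset V) (hW : H.IsComponentOf {v : V | Even (H.deg v)} W) :
    Even (((Finset.univ : Finset (Finset V)).filter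
      (fun X => H.IsComponentOf {v : V | Odd (H.deg v)} X ∧ Odd (H.eBetween X W))).card) := by
  classical
  set So : Set V := {v : V | Odd (H.deg v)} with hSo
  have hWe : ∀ x ∈ W, Even (H.deg x) := fun x hx => comp_subset hW x hx
  set f : E → ℕ := fun e => (W.filter (fun v => v ∈ H.ends e)).card with hfdef
  set L : Finset E := Finset.univ.filter (fun e => Odd (f e)) with hLdef
  -- Step A: the number of edges leaving W is even
  have hsum : (∑ v ∈ W, H.deg v) = ∑ e : E, f e := by
    simp only [hfdef, deg, degIn, Finset.card_filter]
    exact Finset.sum_comm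
  have hEL : Even L.card := by
    have h1 : Even (∑ e : E, f e) := by
      rw [← hsum]
      exact Finset.even_sum _ hWe
    rwa [Finset.even_sum_iff_even_card_odd] at h1
  -- parity characterization of f
  have hf : ∀ (e : E) (a b : V), a ≠ b → H.ends e = s(a, b) →
      (Odd (f e) ↔ ((a ∈ W ∧ b ∉ W) ∨ (b ∈ W ∧ a ∉ W))) := by
    intro e a b hab hends
    have hfe : f e = (if a ∈ W then 1 else 0) + (if b ∈ W then 1 else 0) := by
      simp only [hfdef, hends, Sym2.mem_iff]
      rw [Finset.filter_or]
      rw [Finset.card_union_of_disjoint (by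
        simp only [Finset.disjoint_left, Finset.mem_filter]
        rintro x ⟨-, rfl⟩ ⟨-, rfl⟩
        exact hab rfl)]
      rw [Finset.filter_eq' W a, Finset.filter_eq' W b]
      split_ifs <;> simp
    rw [hfe]
    by_cases ha : a ∈ W <;> by_cases hb : b ∈ W <;> simp [ha, hb] <;> decide
  -- the edge sets between odd components and W
  set EX : Finset V → Finset E :=
    fun X => Finset.univ.filter (fun e : E => ∃ x ∈ X, ∃ y ∈ W, H.ends e = s(x, y)) with hEXdef
  set comps : Finset (Finset V) :=
    Finset.univ.filter (fun X : Finset V => H.IsComponentOf So X) with hcompsdef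
  have hcomps_mem : ∀ X ∈ comps, H.IsComponentOf So X := by
    intro X hX; exact (Finset.mem_filter.1 hX).2
  have hXodd : ∀ X ∈ comps, ∀ x ∈ X, Odd (H.deg x) := by
    intro X hX x hx
    exact comp_subset (hcomps_mem X hX) x hx
  have hnotW : ∀ {x : V}, Odd (H.deg x) → x ∉ W := by
    intro x hodd hxW
    exact (Nat.not_even_iff_odd.2 hodd) (hWe x hxW)
  -- pairwise disjointness of the edge sets
  have hdisj : ∀ X ∈ comps, ∀ X' ∈ comps, X ≠ X' → Disjoint (EX X) (EX X') := by
    intro X hX X' hX' hne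
    rw [Finset.disjoint_left]
    intro e he he'
    simp only [hEXdef, Finset.mem_filter, Finset.mem_univ, true_and] at he he'
    obtain ⟨x, hx, y, hy, hxy⟩ := he
    obtain ⟨x', hx', y', hy', hxy'⟩ := he'
    have hxodd : Odd (H.deg x) := hXodd X hX x hx
    rw [hxy'] at hxy
    rcases Sym2.eq_iff.1 hxy.symm with ⟨h1, h2⟩ | ⟨h1, h2⟩
    · exact hne (comp_eq (hcomps_mem X hX) (hcomps_mem X' hX') hx (h1 ▸ hx'))
    · exact hnotW hxodd (by rw [h1]; exact hy')
  -- the union of the edge sets is L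
  have hunion : comps.biUnion EX = L := by
    ext e
    simp only [hEXdef, hLdef, Finset.mem_biUnion, Finset.mem_filter, Finset.mem_univ, true_and]
    constructor
    · rintro ⟨X, hX, x, hx, y, hy, hxy⟩
      have hxodd : Odd (H.deg x) := hXodd X hX x hx
      have hne : x ≠ y := by
        rintro rfl
        exact hnotW hxodd hy
      exact (hf e x y hne hxy).2 (Or.inr ⟨hy, hnotW hxodd⟩)
    · intro hodd
      obtain ⟨a, b, hab⟩ := sym2_rep (H.ends e)
      have hanb : a ≠ b := by
        intro h
        exact H.no_loops e (by rw [hab, h]; exact Sym2.mk_isDiag_iff.2 rfl)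
      have key : ∀ u w : V, u ≠ w → u ∉ W → w ∈ W → H.ends e = s(u, w) →
          ∃ X, (X ∈ comps ∧ ∃ x ∈ X, ∃ y ∈ W, H.ends e = s(x, y)) := by
        intro u w huw huW hwW hends
        have huodd : Odd (H.deg u) := by
          by_contra h
          have hueven : Even (H.deg u) := Nat.not_odd_iff_even.1 h
          have hadj : H.simple.Adj w u := show w ≠ u ∧ ∃ e : E, H.ends e = s(w, u) from ⟨fun h => huw h.symm, e, by rw [hends, Sym2.eq_swap]⟩
          exact huW (comp_closed hW hwW hueven hadj)
        refine ⟨Finset.univ.filter (fun x => Relation.ReflTransGen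
          (fun a b => a ∈ So ∧ b ∈ So ∧ H.simple.Adj a b) u x), ?_, ?_⟩
        · rw [hcompsdef, Finset.mem_filter]
          refine ⟨Finset.mem_univ _, u, huodd, fun x => ?_⟩
          simp
        · exact ⟨u, Finset.mem_filter.2 ⟨Finset.mem_univ _, Relation.ReflTransGen.refl⟩, w, hwW, hends⟩
      rcases (hf e a b hanb hab).1 hodd with ⟨haW, hbW⟩ | ⟨hbW, haW⟩
      · exact key b a (fun h => hanb h.symm) hbW haW (by rw [hab, Sym2.eq_swap])
      · exact key a b hanb haW hbW hab
  -- conclude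
  have hcard : (∑ X ∈ comps, H.eBetween X W) = L.card := by
    rw [← hunion, Finset.card_biUnion hdisj]
    rfl
  have hfin : Even (comps.filter (fun X => Odd (H.eBetween X W))).card := by
    rw [← Finset.even_sum_iff_even_card_odd]
    rw [hcard]
    exact hEL
  rwa [hcompsdef, Finset.filter_filter] at hfin
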